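/- arXiv:2311.10031 — 5 statements merged into one kernel-verified Lean document; each statement's English description precedes it below -/
import Mathlib

section
/- Let ψ be convex on [0,1] with 0 ≤ 2c−b < 2c−a ≤ c ≤ a < b ≤ 1. If ψ is not affine on the interval (2c−a, a), then (ψ(b)+ψ(2c−b))/2 > (ψ(a)+ψ(2c−a))/2 (strict inequality). -/
/-- Lemma 4.6, strictness: strict inequality unless ψ is affine on (2c−a, a). -/
theorem convex_reflection_bound_strict (ψ : ℝ → ℝ)
    (hconv : ConvexOn ℝ (Set.Icc (0:ℝ) 1) ψ)
    (a b c : ℝ) (h0 : 0 ≤ 2*c - b) (h1 : 2*c - b < 2*c - a)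
    (h2 : 2*c - a ≤ c) (h3 : c ≤ a) (h4 : a < b) (h5 : b ≤ 1)
    (hnotaff : ¬ ∃ p q : ℝ, ∀ t ∈ Set.Ioo (2*c - a) a, ψ t = p * t + q) :
    (ψ a + ψ (2*c - a)) / 2 < (ψ b + ψ (2*c - b)) / 2 := by
  set b' := 2*c - b with hb'def
  set a' := 2*c - a with ha'def
  have hbb'pos : (0:ℝ) < b - b' := by simp only [hb'def]; linarith
  have hbb'ne : b - b' ≠ 0 := ne_of_gt hbb'pos
  have hmb' : b' ∈ Set.Icc (0:ℝ) 1 := ⟨h0, by simp only [hb'def]; linarith⟩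
  have hmb : b ∈ Set.Icc (0:ℝ) 1 := ⟨by simp only [hb'def] at h0 ⊢; linarith, h5⟩
  set t := (b - a)/(b - b') with htdef
  have ht0 : 0 ≤ t := div_nonneg (by linarith) (le_of_lt hbb'pos)
  have ht1 : 0 ≤ 1 - t := by
    have : t ≤ 1 := by rw [htdef, div_le_one hbb'pos]; simp only [hb'def]; linarith
    linarith
  have hta : t*b' + (1-t)*b = a := by
    rw [htdef]; field_simp; ring
  have hta' : t*b + (1-t)*b' = a' := by
    rw [htdef, ha'def, hb'def]; have hne : b - (2*c - b) ≠ 0 := (show (0:ℝ) < b - (2*c - b) by linarith).ne'; field_simp; ring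
  have hca : ψ a ≤ t * ψ b' + (1-t) * ψ b := by
    have := hconv.2 hmb' hmb ht0 ht1 (by ring)
    simpa [smul_eq_mul, hta] using this
  have hca' : ψ a' ≤ t * ψ b + (1-t) * ψ b' := by
    have := hconv.2 hmb hmb' ht0 ht1 (by ring)
    simpa [smul_eq_mul, hta'] using this
  by_contra hle
  push_neg at hle
  have heqa : ψ a = t * ψ b' + (1-t) * ψ b := by linarith
  have heqa' : ψ a' = t * ψ b + (1-t) * ψ b' := by linarith
  -- affine function through (b', ψ b') and (b, ψ b)
  set p := (ψ b - ψ b')/(b - b') with hpdef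
  set q := ψ b' - p * b' with hqdef
  have hLb' : p * b' + q = ψ b' := by rw [hqdef]; ring
  have hLb : p * b + q = ψ b := by rw [hqdef, hpdef]; field_simp; ring
  have hLa' : p * a' + q = ψ a' := by
    rw [heqa', hqdef, hpdef, htdef, ha'def, hb'def]; field_simp; ring
  apply hnotaff
  refine ⟨p, q, fun x hx => ?_⟩
  obtain ⟨hx1, hx2⟩ := hx
  have hxb' : b' < x := by simp only [hb'def]; simp only [ha'def] at hx1; linarith
  have hmx : x ∈ Set.Icc (0:ℝ) 1 := ⟨le_trans h0 (le_of_lt hxb'), by linarith⟩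
  -- upper bound: ψ x ≤ p x + q
  set u := (b - x)/(b - b') with hudef
  have hu0 : 0 ≤ u := div_nonneg (by linarith) (le_of_lt hbb'pos)
  have hu1 : 0 ≤ 1 - u := by
    have : u ≤ 1 := by rw [hudef, div_le_one hbb'pos]; linarith
    linarith
  have hux : u*b' + (1-u)*b = x := by rw [hudef]; field_simp; ring
  have hupper : ψ x ≤ p * x + q := by
    have h := hconv.2 hmb' hmb hu0 hu1 (by ring)
    simp only [smul_eq_mul] at h
    rw [hux] at h
    have heq : u * ψ b' + (1-u) * ψ b = p * x + q := by
      rw [hudef, hqdef, hpdef]; field_simp; ring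
    linarith
  -- lower bound: p x + q ≤ ψ x
  have hxb'pos : (0:ℝ) < x - b' := by linarith
  set s := (x - a')/(x - b') with hsdef
  have hs0 : 0 ≤ s := div_nonneg (by linarith) (le_of_lt hxb'pos)
  have hs1' : 0 < 1 - s := by
    have : s < 1 := by rw [hsdef, div_lt_one hxb'pos]; linarith
    linarith
  have hsx : s*b' + (1-s)*x = a' := by rw [hsdef]; field_simp; ring
  have hlower : p * x + q ≤ ψ x := by
    have h := hconv.2 hmb' hmx hs0 (le_of_lt hs1') (by ring)
    simp only [smul_eq_mul] at h
    rw [hsx] at h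
    -- ψ a' = p a' + q = s (p b' + q) + (1-s)(p x + q)
    have hcomb : s * (p * b' + q) + (1-s) * (p * x + q) = p * a' + q := by
      rw [← hsx]; ring
    rw [hLb'] at hcomb
    have : (1-s) * (p * x + q) ≤ (1-s) * ψ x := by
      have := hLa'
      linarith
    exact le_of_mul_le_mul_left (by linarith [this]) hs1'
  linarith
end

section
/- Let N ≥ 1 be an integer and ψ a continuous, strictly monotone increasing convex function on [0,1], with ψ̄ = (N+1)^{-1} ∑_{j=0}^{N} ψ(j/N). Then the number n of indices j ∈ {0,1,...,N} with ψ(j/N) ≤ ψ̄ satisfies n ≥ (N+1)/2. -/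
/-- Part of Proposition 4.7: at least half of the values ψ(j/N) lie below the average. -/
theorem count_below_average (N : ℕ) (hN : 1 ≤ N) (ψ : ℝ → ℝ)
    (hcont : ContinuousOn ψ (Set.Icc (0:ℝ) 1))
    (hmono : StrictMonoOn ψ (Set.Icc (0:ℝ) 1))
    (hconv : ConvexOn ℝ (Set.Icc (0:ℝ) 1) ψ) :
    ((N : ℝ) + 1) / 2 ≤
      ((Finset.range (N+1)).filter
        (fun j : ℕ => ψ ((j : ℝ) / N) ≤ (∑ k ∈ Finset.range (N+1), ψ (k / N)) / (N+1))).card := by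
  have hN0 : (0:ℝ) < N := by exact_mod_cast hN
  have hmem : ∀ k : ℕ, k ≤ N → ((k:ℝ)/N) ∈ Set.Icc (0:ℝ) 1 := by
    intro k hk
    constructor
    · positivity
    · rw [div_le_one hN0]; exact_mod_cast hk
  have hhalf : (1/2 : ℝ) ∈ Set.Icc (0:ℝ) 1 := by norm_num
  set S := ∑ k ∈ Finset.range (N+1), ψ ((k:ℝ) / N) with hS
  -- the average is at least ψ(1/2)
  have hkey : ((N:ℝ)+1) * ψ (1/2) ≤ S := by
    have hrefl : S = ∑ k ∈ Finset.range (N+1), ψ (((N - k : ℕ) : ℝ) / N) := by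
      rw [hS]
      rw [← Finset.sum_range_reflect (fun j => ψ ((j:ℝ)/N)) (N+1)]
      simp
    have h2 : 2 * S ≥ ∑ k ∈ Finset.range (N+1), 2 * ψ (1/2) := by
      have : 2 * S = ∑ k ∈ Finset.range (N+1),
          (ψ ((k:ℝ)/N) + ψ (((N - k : ℕ) : ℝ) / N)) := by
        rw [Finset.sum_add_distrib, ← hS, ← hrefl]; ring
      rw [this]
      apply Finset.sum_le_sum
      intro k hk
      rw [Finset.mem_range, Nat.lt_succ_iff] at hk
      have hx := hmem k hk
      have hy := hmem (N - k) (Nat.sub_le N k)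
      have hconvk := hconv.2 hx hy (by norm_num : (0:ℝ) ≤ 1/2)
        (by norm_num : (0:ℝ) ≤ 1/2) (by norm_num)
      have hpt : (1/2 : ℝ) • ((k:ℝ)/N) + (1/2 : ℝ) • (((N - k : ℕ) : ℝ)/N) = 1/2 := by
        have : ((N - k : ℕ) : ℝ) = (N:ℝ) - k := by
          push_cast [Nat.cast_sub hk]; ring
        rw [this]
        field_simp
        ring_nf; exact mul_inv_cancel₀ hN0.ne'
      rw [hpt] at hconvk
      simp only [smul_eq_mul] at hconvk
      linarith
    rw [Finset.sum_const, Finset.card_range] at h2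
    simp only [nsmul_eq_mul] at h2
    push_cast at h2 ⊢
    linarith
  have havg : ψ (1/2) ≤ S / ((N:ℝ)+1) := by
    rw [le_div_iff₀ (by positivity)]
    linarith
  -- all j with 2j ≤ N are in the filter
  have hsub : Finset.range (N/2 + 1) ⊆
      (Finset.range (N+1)).filter
        (fun j : ℕ => ψ ((j : ℝ) / N) ≤ S / (N+1)) := by
    intro j hj
    rw [Finset.mem_range, Nat.lt_succ_iff] at hj
    have h2j : 2 * j ≤ N := by omega
    have hjN : j ≤ N := by omega
    rw [Finset.mem_filter, Finset.mem_range, Nat.lt_succ_iff]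
    refine ⟨hjN, ?_⟩
    have hle : (j:ℝ)/N ≤ 1/2 := by
      rw [div_le_div_iff₀ hN0 (by norm_num : (0:ℝ) < 2)]
      have := (Nat.cast_le (α := ℝ)).mpr h2j
      push_cast at this
      linarith
    calc ψ ((j:ℝ)/N) ≤ ψ (1/2) := by
          rcases eq_or_lt_of_le hle with h | h
          · rw [h]
          · exact le_of_lt (hmono (hmem j hjN) hhalf h)
      _ ≤ S / ((N:ℝ)+1) := havg
  have hcard := Finset.card_le_card hsub
  rw [Finset.card_range] at hcard
  have hcast : ((N/2 + 1 : ℕ) : ℝ) ≤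
      (((Finset.range (N+1)).filter
        (fun j : ℕ => ψ ((j : ℝ) / N) ≤ S / (N+1))).card : ℝ) := by
    exact_mod_cast hcard
  have hineq : ((N:ℝ) + 1) / 2 ≤ ((N/2 + 1 : ℕ) : ℝ) := by
    have : N + 1 ≤ 2 * (N/2 + 1) := by omega
    have := (Nat.cast_le (α := ℝ)).mpr this
    push_cast at this ⊢
    linarith
  calc ((N:ℝ) + 1) / 2 ≤ _ := hineq
    _ ≤ _ := hcast
end

section
/- Fix an integer N ≥ 1, a nonnegative continuous strictly increasing convex function ψ on [0,1], and a continuous odd function Φ on [−‖ψ‖_∞, ‖ψ‖_∞] whose restriction to [0, ‖ψ‖_∞] is convex. Let ψ̄ = (N+1)^{-1} ∑_{j=0}^N ψ(j/N). Then ∑_{j=0}^{N} Φ(ψ(j/N) − ψ̄) ≥ 0. -/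
private lemma slope_slope {f : ℝ → ℝ} {s : Set ℝ} (hf : ConvexOn ℝ s f) {a b c d : ℝ}
    (ha : a ∈ s) (hb : b ∈ s) (hc : c ∈ s) (hd : d ∈ s)
    (hab : a < b) (hcd : c < d) (hac : a ≤ c) (hbd : b ≤ d) :
    (f b - f a) / (b - a) ≤ (f d - f c) / (d - c) := by
  have had : a < d := lt_of_lt_of_le hab hbd
  have h1 : (f b - f a) / (b - a) ≤ (f d - f a) / (d - a) :=
    hf.secant_mono ha hb hd hab.ne' had.ne' hbd
  have h2 : (f a - f d) / (a - d) ≤ (f c - f d) / (c - d) :=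
    hf.secant_mono hd ha hc had.ne hcd.ne hac
  have e1 : (f d - f a) / (d - a) = (f a - f d) / (a - d) := by
    rw [show f d - f a = -(f a - f d) by ring, show d - a = -(a - d) by ring, neg_div_neg_eq]
  have e2 : (f d - f c) / (d - c) = (f c - f d) / (c - d) := by
    rw [show f d - f c = -(f c - f d) by ring, show d - c = -(c - d) by ring, neg_div_neg_eq]
  rw [e2]
  rw [e1] at h1
  linarith

private lemma key_lemma (n : ℕ) (x : ℕ → ℝ) (M : ℝ) (Φ : ℝ → ℝ)
    (hmono : ∀ i j : ℕ, i ≤ j → j ≤ n → x i ≤ x j)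
    (hpair : ∀ k j : ℕ, k ≤ j → 2 * j ≤ n → x j + x (n - j) ≤ x k + x (n - k))
    (hsum : ∑ j ∈ Finset.range (n+1), x j = 0)
    (hbd : ∀ j : ℕ, j ≤ n → |x j| ≤ M)
    (hodd : ∀ t ∈ Set.Icc (0:ℝ) M, Φ (-t) = -Φ t)
    (hconv : ConvexOn ℝ (Set.Icc (0:ℝ) M) Φ) :
    0 ≤ ∑ j ∈ Finset.range (n+1), Φ (x j) := by
  have hM0 : 0 ≤ M := le_trans (abs_nonneg _) (hbd 0 (Nat.zero_le n))
  have hΦ0 : Φ 0 = 0 := by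
    have := hodd 0 ⟨le_refl _, hM0⟩
    simp at this
    linarith
  set u : ℕ → ℝ := fun j => max (x (n - j)) 0 with hu
  set v : ℕ → ℝ := fun j => max (-(x j)) 0 with hv
  -- reflection of sums
  have reflect_sum : ∀ f : ℕ → ℝ, ∑ j ∈ Finset.range (n+1), f (n - j)
      = ∑ j ∈ Finset.range (n+1), f j := by
    intro f
    have h := Finset.sum_range_reflect f (n+1)
    simpa using h
  have hreflect : ∑ j ∈ Finset.range (n+1), x (n - j) = 0 := by
    rw [reflect_sum]; exact hsum
  -- claim C
  have claimC : ∀ j : ℕ, 2 * j ≤ n → x j ≤ 0 := by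
    intro j hj
    set m := n / 2 with hm
    have h2m : 2 * m ≤ n := by omega
    have hpairle : ∀ k ∈ Finset.range (n+1), x m + x (n - m) ≤ x k + x (n - k) := by
      intro k hk
      have hkn : k ≤ n := by
        have := Finset.mem_range.mp hk; omega
      rcases le_total k (n - k) with h | h
      · exact hpair k m (by omega) h2m
      · have h1 := hpair (n - k) m (by omega) h2m
        have h2 : n - (n - k) = k := by omega
        rw [h2] at h1
        linarith
    have h1 : (Finset.range (n+1)).card • (x m + x (n - m))
        ≤ ∑ k ∈ Finset.range (n+1), (x k + x (n - k)) :=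
      Finset.card_nsmul_le_sum _ _ _ hpairle
    rw [Finset.card_range, Finset.sum_add_distrib, hsum, hreflect, add_zero] at h1
    have h2 : ((n:ℝ)+1) * (x m + x (n - m)) ≤ 0 := by
      have : ((n+1 : ℕ) : ℝ) * (x m + x (n - m)) ≤ 0 := by
        rw [← nsmul_eq_mul]; exact h1
      push_cast at this; linarith
    have hpos : (0:ℝ) < (n:ℝ) + 1 := by positivity
    have h3 : x m + x (n - m) ≤ 0 := by nlinarith
    have h4 : x j ≤ x m := hmono j m (by omega) (by omega)
    have h5 : x m ≤ x (n - m) := hmono m (n - m) (by omega) (by omega)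
    linarith
  -- membership facts
  have hmemu : ∀ j : ℕ, j ≤ n → u j ∈ Set.Icc (0:ℝ) M := by
    intro j hj
    refine ⟨le_max_right _ _, max_le ?_ hM0⟩
    exact le_trans (le_abs_self _) (hbd (n - j) (by omega))
  have hmemv : ∀ j : ℕ, j ≤ n → v j ∈ Set.Icc (0:ℝ) M := by
    intro j hj
    refine ⟨le_max_right _ _, max_le ?_ hM0⟩
    exact le_trans (neg_le_abs _) (hbd j hj)
  -- decomposition
  have hdecomp : ∀ j ∈ Finset.range (n+1),
      Φ (x j) = Φ (max (x j) 0) - Φ (max (-(x j)) 0) := by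
    intro j hj
    rcases le_total 0 (x j) with h | h
    · rw [max_eq_left h, max_eq_right (by linarith : -(x j) ≤ 0), hΦ0, sub_zero]
    · have hjn : j ≤ n := by have := Finset.mem_range.mp hj; omega
      have hmem : -(x j) ∈ Set.Icc (0:ℝ) M := by
        constructor
        · linarith
        · exact le_trans (neg_le_abs _) (hbd j hjn)
      rw [max_eq_right h, max_eq_left (by linarith : (0:ℝ) ≤ -(x j)), hΦ0]
      have := hodd (-(x j)) hmem
      rw [neg_neg] at this
      linarith
  have hEQ : ∑ j ∈ Finset.range (n+1), Φ (x j)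
      = ∑ j ∈ Finset.range (n+1), (Φ (u j) - Φ (v j)) := by
    rw [Finset.sum_congr rfl hdecomp, Finset.sum_sub_distrib, Finset.sum_sub_distrib]
    congr 1
    exact (reflect_sum (fun i => Φ (max (x i) 0))).symm
  have hdsum : ∑ j ∈ Finset.range (n+1), (u j - v j) = 0 := by
    have h1 : ∑ j ∈ Finset.range (n+1), u j = ∑ j ∈ Finset.range (n+1), max (x j) 0 :=
      reflect_sum (fun i => max (x i) 0)
    rw [Finset.sum_sub_distrib, h1, ← Finset.sum_sub_distrib]
    rw [show (∑ j ∈ Finset.range (n+1), (max (x j) 0 - v j))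
        = ∑ j ∈ Finset.range (n+1), x j by
      apply Finset.sum_congr rfl; intro j _
      simp only [hv]
      rcases le_total 0 (x j) with h | h
      · rw [max_eq_left h, max_eq_right (by linarith : -(x j) ≤ 0)]; ring
      · rw [max_eq_right h, max_eq_left (by linarith : (0:ℝ) ≤ -(x j))]; ring]
    exact hsum
  rw [hEQ]
  set Sneg := (Finset.range (n+1)).filter (fun k => u k - v k < 0) with hSneg
  by_cases hne : Sneg.Nonempty
  · obtain ⟨k₀, hk₀mem, hk₀max⟩ :=
      Finset.exists_max_image Sneg (fun k => (Φ (v k) - Φ (u k)) / (v k - u k)) hne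
    set γ := (Φ (v k₀) - Φ (u k₀)) / (v k₀ - u k₀) with hγ
    have hk₀range : k₀ ≤ n := by
      have := Finset.mem_range.mp (Finset.mem_filter.mp hk₀mem).1; omega
    have hk₀neg : u k₀ - v k₀ < 0 := (Finset.mem_filter.mp hk₀mem).2
    have hterm : ∀ j ∈ Finset.range (n+1), γ * (u j - v j) ≤ Φ (u j) - Φ (v j) := by
      intro j hj
      have hjn : j ≤ n := by have := Finset.mem_range.mp hj; omega
      rcases lt_trichotomy (u j - v j) 0 with hd | hd | hd
      · -- j ∈ Sneg : equality via slope, then compare slopes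
        have hjS : j ∈ Sneg := Finset.mem_filter.mpr ⟨hj, hd⟩
        have hne' : v j - u j ≠ 0 := by linarith
        have heq : Φ (u j) - Φ (v j)
            = (Φ (v j) - Φ (u j)) / (v j - u j) * (u j - v j) := by
          field_simp
          ring
        rw [heq]
        exact mul_le_mul_of_nonpos_right (hk₀max j hjS) (le_of_lt hd)
      · rw [hd, mul_zero]
        have : u j = v j := by linarith
        rw [this]; simp
      · -- u j > v j
        have hvu : v j < u j := by linarith
        have hxnj : 0 < x (n - j) := by
          by_contra h
          push_neg at h
          have : u j = 0 := max_eq_right h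
          have := hmemv j hjn
          simp only [Set.mem_Icc] at this
          linarith [this.1]
        have huj : u j = x (n - j) := max_eq_left (le_of_lt hxnj)
        have hxj : x j ≤ 0 := by
          by_contra h
          push_neg at h
          have h2j : ¬ (2 * j ≤ n) := fun hc => absurd (claimC j hc) (not_le.mpr h)
          have : 2 * (n - j) ≤ n := by omega
          exact absurd (claimC (n - j) this) (not_le.mpr hxnj)
        have hvj : v j = -(x j) := max_eq_left (by linarith)
        have hdj : 0 < x j + x (n - j) := by
          rw [huj, hvj] at hd; linarith
        -- k₀ facts
        have hvk₀ : 0 < v k₀ := by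
          have := (hmemu k₀ hk₀range).1
          linarith
        have hxk₀ : x k₀ < 0 := by
          by_contra h
          push_neg at h
          have : v k₀ = 0 := max_eq_right (by linarith)
          linarith
        have hvk₀' : v k₀ = -(x k₀) := max_eq_left (by linarith)
        -- j < k₀
        have hjk₀ : j ≤ k₀ := by
          by_contra h
          push_neg at h
          have h2j : 2 * j < n := by
            by_contra h2
            push_neg at h2
            have : n - j ≤ j := by omega
            have := hmono (n - j) j this hjn
            linarith
          have hp := hpair k₀ j (le_of_lt h) (by omega)
          have hxk₀n : x (n - j) ≤ x (n - k₀) := hmono (n - j) (n - k₀) (by omega) (by omega)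
          have huk₀ : u k₀ = x (n - k₀) := max_eq_left (by linarith)
          rw [huk₀, hvk₀'] at hk₀neg
          linarith
        have hxjxk₀ : x j ≤ x k₀ := hmono j k₀ hjk₀ hk₀range
        -- crossing inequalities
        have hAC : u k₀ ≤ v j := by
          rcases le_total (x (n - k₀)) 0 with h | h
          · rw [hvj]
            have : u k₀ = 0 := max_eq_right h
            rw [this]; linarith
          · have huk₀ : u k₀ = x (n - k₀) := max_eq_left h
            rw [huk₀, hvk₀'] at hk₀neg
            rw [huk₀, hvj]
            linarith
        have hBD : v k₀ ≤ u j := by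
          rw [hvk₀', huj]
          linarith
        have hslope := slope_slope hconv (hmemu k₀ hk₀range) (hmemv k₀ hk₀range)
          (hmemv j hjn) (hmemu j hjn) (by linarith) hvu hAC hBD
        have hpos : (0:ℝ) < u j - v j := by linarith
        have h2 : γ * (u j - v j) ≤ (Φ (u j) - Φ (v j)) / (u j - v j) * (u j - v j) := by
          apply mul_le_mul_of_nonneg_right _ (le_of_lt hpos)
          exact le_trans (le_of_eq hγ) hslope
        calc γ * (u j - v j) ≤ (Φ (u j) - Φ (v j)) / (u j - v j) * (u j - v j) := h2
          _ = Φ (u j) - Φ (v j) := by field_simp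
    calc (0:ℝ) = γ * ∑ j ∈ Finset.range (n+1), (u j - v j) := by rw [hdsum, mul_zero]
      _ = ∑ j ∈ Finset.range (n+1), γ * (u j - v j) := by rw [Finset.mul_sum]
      _ ≤ ∑ j ∈ Finset.range (n+1), (Φ (u j) - Φ (v j)) := Finset.sum_le_sum hterm
  · -- no negative differences: all are zero
    have hall : ∀ j ∈ Finset.range (n+1), u j - v j = 0 := by
      have hnonneg : ∀ j ∈ Finset.range (n+1), 0 ≤ u j - v j := by
        intro j hj
        by_contra h
        push_neg at h
        exact hne ⟨j, Finset.mem_filter.mpr ⟨hj, h⟩⟩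
      exact (Finset.sum_eq_zero_iff_of_nonneg hnonneg).mp hdsum
    have : ∀ j ∈ Finset.range (n+1), Φ (u j) - Φ (v j) = 0 := by
      intro j hj
      have : u j = v j := by linarith [hall j hj]
      rw [this]; ring
    rw [Finset.sum_congr rfl this]
    simp

/-- Theorem 4.4 (Madrid–Simon–Wells). -/
theorem MSW_half_odd_integer (N : ℕ) (hN : 1 ≤ N) (ψ Φ : ℝ → ℝ)
    (hψ0 : ∀ x ∈ Set.Icc (0:ℝ) 1, 0 ≤ ψ x)
    (hψcont : ContinuousOn ψ (Set.Icc (0:ℝ) 1))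
    (hψmono : StrictMonoOn ψ (Set.Icc (0:ℝ) 1))
    (hψconv : ConvexOn ℝ (Set.Icc (0:ℝ) 1) ψ)
    (M : ℝ) (hM : M = sSup ((fun x => |ψ x|) '' Set.Icc (0:ℝ) 1))
    (hΦcont : ContinuousOn Φ (Set.Icc (-M) M))
    (hΦodd : ∀ t ∈ Set.Icc (-M) M, Φ (-t) = -Φ t)
    (hΦconv : ConvexOn ℝ (Set.Icc (0:ℝ) M) Φ) :
    0 ≤ ∑ j ∈ Finset.range (N+1),
        Φ (ψ (j / N) - (∑ k ∈ Finset.range (N+1), ψ (k / N)) / (N+1)) := by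
  have hNpos : (0:ℝ) < N := by exact_mod_cast hN
  have hmem : ∀ j : ℕ, j ≤ N → ((j:ℝ) / N) ∈ Set.Icc (0:ℝ) 1 := by
    intro j hj
    constructor
    · positivity
    · rw [div_le_one hNpos]; exact_mod_cast hj
  have hψle : ∀ t ∈ Set.Icc (0:ℝ) 1, ψ t ≤ M := by
    intro t ht
    have hbdd : BddAbove ((fun x => |ψ x|) '' Set.Icc (0:ℝ) 1) :=
      (isCompact_Icc.image_of_continuousOn hψcont.abs).bddAbove
    calc ψ t = |ψ t| := (abs_of_nonneg (hψ0 t ht)).symm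
      _ ≤ sSup ((fun x => |ψ x|) '' Set.Icc (0:ℝ) 1) := le_csSup hbdd ⟨t, ht, rfl⟩
      _ = M := hM.symm
  have h01 : (0:ℝ) ∈ Set.Icc (0:ℝ) 1 := ⟨le_refl _, zero_le_one⟩
  have hM0 : 0 ≤ M := le_trans (hψ0 0 h01) (hψle 0 h01)
  set S := ∑ k ∈ Finset.range (N+1), ψ ((k:ℝ) / N) with hS
  have hS0 : 0 ≤ S := Finset.sum_nonneg (fun k hk => hψ0 _ (hmem k (by
    have := Finset.mem_range.mp hk; omega)))
  have hSM : S ≤ ((N:ℝ)+1) * M := by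
    have h1 : ∀ k ∈ Finset.range (N+1), ψ ((k:ℝ)/N) ≤ M := fun k hk =>
      hψle _ (hmem k (by have := Finset.mem_range.mp hk; omega))
    calc S ≤ ∑ k ∈ Finset.range (N+1), M := Finset.sum_le_sum h1
      _ = ((N:ℝ)+1) * M := by
        rw [Finset.sum_const, Finset.card_range, nsmul_eq_mul]
        push_cast; ring
  have hN1pos : (0:ℝ) < (N:ℝ) + 1 := by positivity
  have hmean0 : 0 ≤ S / ((N:ℝ)+1) := by positivity
  have hmeanM : S / ((N:ℝ)+1) ≤ M := by
    rw [div_le_iff₀ hN1pos]; linarith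
  apply key_lemma N (fun j => ψ ((j:ℝ) / N) - S / ((N:ℝ)+1)) M Φ
  · -- monotone
    intro i j hij hjN
    have h1 : ψ ((i:ℝ)/N) ≤ ψ ((j:ℝ)/N) := by
      apply hψmono.monotoneOn (hmem i (by omega)) (hmem j hjN)
      have hij' : (i:ℝ) ≤ (j:ℝ) := by exact_mod_cast hij
      gcongr
    linarith
  · -- pair
    intro k j hkj hjN
    have hjN' : j ≤ N := by omega
    have hkN : k ≤ N := by omega
    have hcastj : (((N - j : ℕ)):ℝ) = (N:ℝ) - j := by
      rw [Nat.cast_sub hjN']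
    have hcastk : (((N - k : ℕ)):ℝ) = (N:ℝ) - k := by
      rw [Nat.cast_sub hkN]
    suffices h : ψ ((j:ℝ)/N) + ψ (((N - j : ℕ):ℝ)/N) ≤ ψ ((k:ℝ)/N) + ψ (((N - k : ℕ):ℝ)/N) by
      linarith
    rcases eq_or_lt_of_le hkj with rfl | hkj'
    · exact le_refl _
    · have hcj : (j:ℝ) ≤ (N:ℝ) - j := by
        have h2j : ((2*j : ℕ):ℝ) ≤ (N:ℝ) := by exact_mod_cast hjN
        push_cast at h2j; linarith
      have hkjR : (k:ℝ) < (j:ℝ) := by exact_mod_cast hkj'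
      have hab : (k:ℝ)/N < (j:ℝ)/N := by gcongr
      have hcd : ((N:ℝ) - j)/N < ((N:ℝ) - k)/N := by gcongr ?_ / N; linarith
      have hbc : (j:ℝ)/N ≤ ((N:ℝ) - j)/N := by gcongr
      have hmemc : ((N:ℝ) - j)/N ∈ Set.Icc (0:ℝ) 1 := by
        rw [← hcastj]; exact hmem (N - j) (by omega)
      have hmemd : ((N:ℝ) - k)/N ∈ Set.Icc (0:ℝ) 1 := by
        rw [← hcastk]; exact hmem (N - k) (by omega)
      have hslope := slope_slope hψconv (hmem k hkN) (hmem j hjN') hmemc hmemd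
        hab hcd (le_trans hab.le hbc) (le_trans hbc hcd.le)
      have heq : (j:ℝ)/N - (k:ℝ)/N = ((N:ℝ) - k)/N - ((N:ℝ) - j)/N := by ring
      rw [← heq] at hslope
      have hba : (0:ℝ) < (j:ℝ)/N - (k:ℝ)/N := by linarith
      have h3 := mul_le_mul_of_nonneg_right hslope hba.le
      rw [div_mul_cancel₀ _ hba.ne', div_mul_cancel₀ _ hba.ne'] at h3
      rw [hcastj, hcastk]
      linarith
  · -- sum zero
    rw [Finset.sum_sub_distrib, ← hS, Finset.sum_const, Finset.card_range, nsmul_eq_mul]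
    have hne : ((N:ℝ)+1) ≠ 0 := by positivity
    push_cast
    try field_simp
    ring
  · -- bound
    intro j hjN
    have h1 : 0 ≤ ψ ((j:ℝ)/N) := hψ0 _ (hmem j hjN)
    have h2 : ψ ((j:ℝ)/N) ≤ M := hψle _ (hmem j hjN)
    rw [abs_le]
    exact ⟨by linarith, by linarith⟩
  · intro t ht
    exact hΦodd t ⟨by linarith [ht.1], ht.2⟩
  · exact hΦconv
end

section
/- For every integer m ≥ 1 and every half-odd-integer S (i.e., S = k + 1/2 for integer k ≥ 0), the sum ∑_{j} (3j² − S(S+1))^{2m+1} over j ∈ {−S, −S+1, ..., S−1, S} (so j is a half-odd-integer ranging over 2S+1 values) is nonnegative. -/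
open Finset

/-- The sequence `t_i = 3(i+1/2)^2 - S(S+1)` with `S = k + 1/2`, increasing in `i`. -/
private noncomputable def tt (k i : ℕ) : ℝ := 3*((i:ℝ)+1/2)^2 - ((k:ℝ)+1/2)*((k:ℝ)+3/2)

/-- Positive parts, reflected (decreasing). -/
private noncomputable def AA (k i : ℕ) : ℝ := max (tt k (k-i)) 0

/-- Negative parts (decreasing). -/
private noncomputable def BB (k i : ℕ) : ℝ := max (-(tt k i)) 0

/-- The divided-difference weights. -/
private noncomputable def cc (q k i : ℕ) : ℝ := ∑ l ∈ range q, (AA k i)^l * (BB k i)^(q-1-l)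

private lemma tt_mono (k : ℕ) {a b : ℕ} (h : a ≤ b) : tt k a ≤ tt k b := by
  have : (a:ℝ) ≤ b := by exact_mod_cast h
  have ha : (0:ℝ) ≤ a := by positivity
  unfold tt
  nlinarith

private lemma tt_nonpos (k j : ℕ) (h : 2*j+1 ≤ k) : tt k j ≤ 0 := by
  have : 2*(j:ℝ)+1 ≤ k := by exact_mod_cast h
  have hj : (0:ℝ) ≤ j := by positivity
  unfold tt
  nlinarith

private lemma AA_nonneg (k i : ℕ) : 0 ≤ AA k i := le_max_right _ _
private lemma BB_nonneg (k i : ℕ) : 0 ≤ BB k i := le_max_right _ _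

private lemma AA_mono (k i : ℕ) : AA k (i+1) ≤ AA k i :=
  max_le_max (tt_mono k (Nat.sub_le_sub_left (Nat.le_succ i) k)) le_rfl

private lemma BB_mono (k i : ℕ) : BB k (i+1) ≤ BB k i :=
  max_le_max (by have := tt_mono k (Nat.le_succ i); linarith) le_rfl

private lemma cc_mono (q k i : ℕ) : cc q k (i+1) ≤ cc q k i := by
  apply Finset.sum_le_sum
  intro l _
  exact mul_le_mul (pow_le_pow_left₀ (AA_nonneg k (i+1)) (AA_mono k i) l)
    (pow_le_pow_left₀ (BB_nonneg k (i+1)) (BB_mono k i) _)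
    (pow_nonneg (BB_nonneg k (i+1)) _) (pow_nonneg (AA_nonneg k i) _)

private lemma sum_half_sq (n : ℕ) :
    ∑ i ∈ range n, ((i:ℝ)+1/2)^2 = (n:ℝ)^3/3 - (n:ℝ)/12 := by
  induction n with
  | zero => simp
  | succ n ih => rw [Finset.sum_range_succ, ih]; push_cast; ring

private lemma sum_quad (k s : ℕ) :
    ∑ i ∈ range s, (6*(i:ℝ)^2 - 6*(k:ℝ)*(i:ℝ) + ((k:ℝ)^2 - (k:ℝ)))
      = (s:ℝ)*((k:ℝ)+1-2*(s:ℝ))*((k:ℝ)+1-(s:ℝ)) := by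
  induction s with
  | zero => simp
  | succ s ih => rw [Finset.sum_range_succ, ih]; push_cast; ring

private lemma sum_tt (k : ℕ) : ∑ i ∈ range (k+1), tt k i = 0 := by
  unfold tt
  rw [Finset.sum_sub_distrib, Finset.sum_const, card_range, ← Finset.mul_sum,
    sum_half_sq]
  push_cast; ring

private lemma max_sub_max (x : ℝ) : max x 0 - max (-x) 0 = x := by
  rcases le_total x 0 with h | h
  · rw [max_eq_right h, max_eq_left (by linarith)]; ring
  · rw [max_eq_left h, max_eq_right (by linarith)]; ring

private lemma sum_AA (k : ℕ) (f : ℝ → ℝ) :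
    ∑ i ∈ range (k+1), f (AA k i) = ∑ i ∈ range (k+1), f (max (tt k i) 0) := by
  rw [← Finset.sum_range_reflect (fun i => f (max (tt k i) 0)) (k+1)]
  apply Finset.sum_congr rfl
  intro i _
  simp [AA]

private lemma sum_AA_id (k : ℕ) :
    ∑ i ∈ range (k+1), AA k i = ∑ i ∈ range (k+1), max (tt k i) 0 := by
  rw [← Finset.sum_range_reflect (fun i => max (tt k i) 0) (k+1)]
  apply Finset.sum_congr rfl
  intro i _
  simp [AA]

private lemma sum_d (k : ℕ) : ∑ i ∈ range (k+1), (AA k i - BB k i) = 0 := by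
  rw [Finset.sum_sub_distrib, sum_AA_id, ← Finset.sum_sub_distrib]
  have : ∀ i ∈ range (k+1), max (tt k i) 0 - BB k i = tt k i := by
    intro i _; exact max_sub_max (tt k i)
  rw [Finset.sum_congr rfl this, sum_tt]

/-- Partial sums of `AA - BB` are nonnegative (the majorization). -/
private lemma partial_nonneg (k s : ℕ) (hs : s ≤ k+1) :
    0 ≤ ∑ i ∈ range s, (AA k i - BB k i) := by
  by_cases h2s : 2*s ≤ k+1
  · have hterm : ∀ i ∈ range s,
        6*(i:ℝ)^2 - 6*(k:ℝ)*(i:ℝ) + ((k:ℝ)^2 - (k:ℝ)) ≤ AA k i - BB k i := by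
      intro i hi
      rw [Finset.mem_range] at hi
      have hik : i ≤ k := by omega
      have h1 : tt k i ≤ 0 := tt_nonpos k i (by omega)
      have hB : BB k i = -(tt k i) := max_eq_left (by linarith)
      have hA : tt k (k-i) ≤ AA k i := le_max_left _ _
      have heq : tt k (k-i) + tt k i
          = 6*(i:ℝ)^2 - 6*(k:ℝ)*(i:ℝ) + ((k:ℝ)^2 - (k:ℝ)) := by
        unfold tt
        rw [Nat.cast_sub hik]
        ring
      rw [hB]
      linarith
    have h := Finset.sum_le_sum hterm
    rw [sum_quad] at h
    have hs' : 2*(s:ℝ) ≤ (k:ℝ)+1 := by exact_mod_cast h2s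
    have hs0 : (0:ℝ) ≤ s := by positivity
    have hprod : 0 ≤ (s:ℝ)*((k:ℝ)+1-2*(s:ℝ))*((k:ℝ)+1-(s:ℝ)) := by
      apply mul_nonneg (mul_nonneg hs0 (by linarith)) (by linarith)
    linarith
  · have hIco : ∑ i ∈ Finset.Ico s (k+1), (AA k i - BB k i) ≤ 0 := by
      apply Finset.sum_nonpos
      intro i hi
      rw [Finset.mem_Ico] at hi
      have hA : AA k i = 0 := max_eq_right (tt_nonpos k (k-i) (by omega))
      rw [hA]
      have := BB_nonneg k i
      linarith
    have := Finset.sum_Ico_eq_sub (fun i => AA k i - BB k i) hs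
    rw [sum_d] at this
    linarith

/-- Abel summation positivity. -/
private lemma abel_aux (d c : ℕ → ℝ) (hc : ∀ i, c (i+1) ≤ c i) (N : ℕ)
    (hD : ∀ s, s ≤ N → 0 ≤ ∑ i ∈ range s, d i) :
    ∀ n, n ≤ N → (∑ i ∈ range n, d i) * c n ≤ ∑ i ∈ range n, d i * c i := by
  intro n
  induction n with
  | zero => simp
  | succ n ih =>
    intro hn
    have hQ := ih (by omega)
    rw [Finset.sum_range_succ, Finset.sum_range_succ]
    have h1 : (∑ i ∈ range (n+1), d i) * c (n+1)
        ≤ (∑ i ∈ range (n+1), d i) * c n :=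
      mul_le_mul_of_nonneg_left (hc n) (hD (n+1) hn)
    rw [Finset.sum_range_succ] at h1
    have h2 : (∑ x ∈ range n, d x + d n) * c n
        = (∑ x ∈ range n, d x) * c n + d n * c n := by ring
    linarith

private lemma core (m k : ℕ) : 0 ≤ ∑ i ∈ range (k+1), (tt k i)^(2*m+1) := by
  set q := 2*m+1 with hq
  have hodd : Odd q := ⟨m, by omega⟩
  -- split into positive and negative parts
  have hsplit : ∀ i, (tt k i)^q = (max (tt k i) 0)^q - (BB k i)^q := by
    intro i
    unfold BB
    rcases le_total (tt k i) 0 with h | h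
    · rw [max_eq_right h, max_eq_left (by linarith), hodd.neg_pow,
        zero_pow (by omega)]
      ring
    · rw [max_eq_left h, max_eq_right (by linarith), zero_pow (by omega)]
      ring
  calc (0:ℝ) = (∑ i ∈ range (k+1), (AA k i - BB k i)) * cc q k (k+1) := by
        rw [sum_d]; ring
    _ ≤ ∑ i ∈ range (k+1), (AA k i - BB k i) * cc q k i :=
        abel_aux _ _ (cc_mono q k) (k+1) (partial_nonneg k) (k+1) le_rfl
    _ = ∑ i ∈ range (k+1), ((AA k i)^q - (BB k i)^q) := by
        apply Finset.sum_congr rfl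
        intro i _
        rw [← geom_sum₂_mul (AA k i) (BB k i) q, cc, mul_comm]
    _ = ∑ i ∈ range (k+1), (AA k i)^q - ∑ i ∈ range (k+1), (BB k i)^q := by
        rw [Finset.sum_sub_distrib]
    _ = ∑ i ∈ range (k+1), (max (tt k i) 0)^q - ∑ i ∈ range (k+1), (BB k i)^q := by
        rw [sum_AA k (fun x => x^q)]
    _ = ∑ i ∈ range (k+1), (tt k i)^q := by
        rw [← Finset.sum_sub_distrib]
        exact Finset.sum_congr rfl (fun i _ => (hsplit i).symm)

/-- Corollary 4.5: the inequality (3.6) for half-odd-integer spin S = k + 1/2. -/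
theorem spin_sum_nonneg_half_odd (m k : ℕ) (hm : 1 ≤ m) :
    0 ≤ ∑ i ∈ Finset.range (2*k + 2),
        (3 * (-(k + 1/2 : ℝ) + i)^2 - (k + 1/2) * ((k + 1/2) + 1))^(2*m + 1) := by
  have hre : ∑ i ∈ Finset.range (2*k + 2),
      (3 * (-(k + 1/2 : ℝ) + i)^2 - (k + 1/2) * ((k + 1/2) + 1))^(2*m + 1)
      = 2 * ∑ i ∈ range (k+1), (tt k i)^(2*m+1) := by
    rw [show 2*k+2 = (k+1)+(k+1) by ring, Finset.sum_range_add]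
    have h2 : ∀ i ∈ range (k+1),
        (3 * (-(k + 1/2 : ℝ) + ((k+1)+i : ℕ))^2 - (k + 1/2) * ((k + 1/2) + 1))^(2*m + 1)
        = (tt k i)^(2*m+1) := by
      intro i _
      have : 3 * (-(k + 1/2 : ℝ) + ((k+1)+i : ℕ))^2 - (k + 1/2) * ((k + 1/2) + 1)
          = tt k i := by
        unfold tt; push_cast; ring
      rw [this]
    have h1 : ∑ i ∈ range (k+1),
        (3 * (-(k + 1/2 : ℝ) + i)^2 - (k + 1/2) * ((k + 1/2) + 1))^(2*m + 1)
        = ∑ i ∈ range (k+1), (tt k i)^(2*m+1) := by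
      rw [← Finset.sum_range_reflect (fun i => (tt k i)^(2*m+1)) (k+1)]
      apply Finset.sum_congr rfl
      intro i hi
      rw [Finset.mem_range] at hi
      have hik : i ≤ k := by omega
      have : 3 * (-(k + 1/2 : ℝ) + i)^2 - (k + 1/2) * ((k + 1/2) + 1)
          = tt k (k+1-1-i) := by
        simp only [Nat.add_sub_cancel]
        unfold tt
        rw [Nat.cast_sub hik]
        ring
      rw [this]
    rw [h1, Finset.sum_congr rfl h2]
    ring
  rw [hre]
  have := core m k
  linarith
end

section
/- Let x, y ∈ ℝ^n be sorted decreasingly with equal sums, such that x majorizes y (all partial sums of x dominate those of y). Let φ be a continuous convex function on an interval containing all entries of x and y. Then ∑_{j=1}^n φ(x_j) ≥ ∑_{j=1}^n φ(y_j). -/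
private lemma karamata_div_flip (φ : ℝ → ℝ) (u v : ℝ) :
    (φ u - φ v) / (u - v) = (φ v - φ u) / (v - u) := by
  rw [← neg_div_neg_eq, neg_sub, neg_sub]

/-- Monotonicity of secant slopes for ordered pairs of points. -/
private lemma karamata_slope_four {a b : ℝ} {φ : ℝ → ℝ}
    (hφ : ConvexOn ℝ (Set.Icc a b) φ) {p q r s : ℝ}
    (hp : p ∈ Set.Icc a b) (hq : q ∈ Set.Icc a b) (hr : r ∈ Set.Icc a b)
    (hs : s ∈ Set.Icc a b) (hpq : p < q) (hrs : r < s) (hpr : p ≤ r) (hqs : q ≤ s) :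
    (φ q - φ p) / (q - p) ≤ (φ s - φ r) / (s - r) := by
  have hps : p < s := lt_of_lt_of_le hpq hqs
  have h1 : (φ q - φ p) / (q - p) ≤ (φ s - φ p) / (s - p) :=
    hφ.secant_mono hp hq hs hpq.ne' hps.ne' hqs
  have h2 : (φ p - φ s) / (p - s) ≤ (φ r - φ s) / (r - s) :=
    hφ.secant_mono hs hp hr hps.ne hrs.ne hpr
  rw [karamata_div_flip φ p s, karamata_div_flip φ r s] at h2
  exact h1.trans h2

/-- Monotonicity of secant slopes for unordered pairs. -/
private lemma karamata_slope_pair {a b : ℝ} {φ : ℝ → ℝ}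
    (hφ : ConvexOn ℝ (Set.Icc a b) φ) {x1 y1 x2 y2 : ℝ}
    (hx1 : x1 ∈ Set.Icc a b) (hy1 : y1 ∈ Set.Icc a b)
    (hx2 : x2 ∈ Set.Icc a b) (hy2 : y2 ∈ Set.Icc a b)
    (h1 : x1 ≠ y1) (h2 : x2 ≠ y2) (hx : x2 ≤ x1) (hy : y2 ≤ y1) :
    (φ x2 - φ y2) / (x2 - y2) ≤ (φ x1 - φ y1) / (x1 - y1) := by
  have e2 : (φ x2 - φ y2) / (x2 - y2)
      = (φ (max x2 y2) - φ (min x2 y2)) / (max x2 y2 - min x2 y2) := by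
    rcases le_total x2 y2 with h | h
    · rw [min_eq_left h, max_eq_right h, karamata_div_flip]
    · rw [min_eq_right h, max_eq_left h]
  have e1 : (φ x1 - φ y1) / (x1 - y1)
      = (φ (max x1 y1) - φ (min x1 y1)) / (max x1 y1 - min x1 y1) := by
    rcases le_total x1 y1 with h | h
    · rw [min_eq_left h, max_eq_right h, karamata_div_flip]
    · rw [min_eq_right h, max_eq_left h]
  rw [e1, e2]
  have hmin2 : min x2 y2 ∈ Set.Icc a b := by
    rcases min_choice x2 y2 with h | h <;> rw [h] <;> assumption
  have hmax2 : max x2 y2 ∈ Set.Icc a b := by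
    rcases max_choice x2 y2 with h | h <;> rw [h] <;> assumption
  have hmin1 : min x1 y1 ∈ Set.Icc a b := by
    rcases min_choice x1 y1 with h | h <;> rw [h] <;> assumption
  have hmax1 : max x1 y1 ∈ Set.Icc a b := by
    rcases max_choice x1 y1 with h | h <;> rw [h] <;> assumption
  exact karamata_slope_four hφ hmin2 hmax2 hmin1 hmax1 (min_lt_max.2 h2)
    (min_lt_max.2 h1) (min_le_min hx hy) (max_le_max hx hy)

/-- Karamata's inequality for decreasingly sorted vectors with equal sums. -/
theorem karamata (n : ℕ) (x y : ℕ → ℝ)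
    (hxdec : ∀ j k, 1 ≤ j → j ≤ k → k ≤ n → x k ≤ x j)
    (hydec : ∀ j k, 1 ≤ j → j ≤ k → k ≤ n → y k ≤ y j)
    (hsum : ∑ j ∈ Finset.Icc 1 n, x j = ∑ j ∈ Finset.Icc 1 n, y j)
    (hmaj : ∀ k, 1 ≤ k → k ≤ n →
      ∑ j ∈ Finset.Icc 1 k, y j ≤ ∑ j ∈ Finset.Icc 1 k, x j)
    (a b : ℝ) (φ : ℝ → ℝ)
    (hφconv : ConvexOn ℝ (Set.Icc a b) φ)
    (hφcont : ContinuousOn φ (Set.Icc a b))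
    (hxmem : ∀ j, 1 ≤ j → j ≤ n → x j ∈ Set.Icc a b)
    (hymem : ∀ j, 1 ≤ j → j ≤ n → y j ∈ Set.Icc a b) :
    ∑ j ∈ Finset.Icc 1 n, φ (y j) ≤ ∑ j ∈ Finset.Icc 1 n, φ (x j) := by
  classical
  set U : Finset ℕ := (Finset.Icc 1 n).filter (fun j => x j ≠ y j) with hUdef
  by_cases hUe : U.Nonempty
  · -- main case
    set m : ℕ := U.max' hUe with hmdef
    -- construct the "next unequal index" function F
    obtain ⟨F, hFU, hFid, hFmono⟩ : ∃ F : ℕ → ℕ, (∀ j, F j ∈ U) ∧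
        (∀ j ∈ U, F j = j) ∧ (∀ j k, j ≤ k → F j ≤ F k) := by
      refine ⟨fun j => if h : (U.filter (fun u => j ≤ u)).Nonempty
        then (U.filter (fun u => j ≤ u)).min' h else m, ?_, ?_, ?_⟩
      · intro j
        by_cases h : (U.filter (fun u => j ≤ u)).Nonempty
        · simp only [dif_pos h]
          exact (Finset.mem_filter.1 (Finset.min'_mem _ h)).1
        · simp only [dif_neg h]
          exact U.max'_mem hUe
      · intro j hj
        have hjf : j ∈ U.filter (fun u => j ≤ u) :=
          Finset.mem_filter.2 ⟨hj, le_refl j⟩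
        have h : (U.filter (fun u => j ≤ u)).Nonempty := ⟨j, hjf⟩
        simp only [dif_pos h]
        refine le_antisymm (Finset.min'_le _ _ hjf) ?_
        exact (Finset.mem_filter.1 (Finset.min'_mem _ h)).2
      · intro j k hjk
        by_cases hk : (U.filter (fun u => k ≤ u)).Nonempty
        · have hsub : U.filter (fun u => k ≤ u) ⊆ U.filter (fun u => j ≤ u) := by
            intro u hu
            obtain ⟨h1, h2⟩ := Finset.mem_filter.1 hu
            exact Finset.mem_filter.2 ⟨h1, hjk.trans h2⟩
          have hj : (U.filter (fun u => j ≤ u)).Nonempty :=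
            hk.mono hsub
          simp only [dif_pos hj, dif_pos hk]
          exact Finset.min'_le _ _ (hsub (Finset.min'_mem _ hk))
        · by_cases hj : (U.filter (fun u => j ≤ u)).Nonempty
          · simp only [dif_pos hj, dif_neg hk]
            exact Finset.le_max' U _ (Finset.mem_filter.1 (Finset.min'_mem _ hj)).1
          · simp only [dif_neg hj, dif_neg hk]
            exact le_rfl
    -- the slope sequence
    set c : ℕ → ℝ := fun j => (φ (x (F j)) - φ (y (F j))) / (x (F j) - y (F j)) with hcdef
    have hUprop : ∀ u ∈ U, 1 ≤ u ∧ u ≤ n ∧ x u ≠ y u := by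
      intro u hu
      obtain ⟨hu1, hu2⟩ := Finset.mem_filter.1 hu
      obtain ⟨h1, h2⟩ := Finset.mem_Icc.1 hu1
      exact ⟨h1, h2, hu2⟩
    -- c is antitone
    have hcanti : ∀ j k, j ≤ k → c k ≤ c j := by
      intro j k hjk
      obtain ⟨hu1, hu2, hu3⟩ := hUprop _ (hFU j)
      obtain ⟨hv1, hv2, hv3⟩ := hUprop _ (hFU k)
      have huv : F j ≤ F k := hFmono j k hjk
      exact karamata_slope_pair hφconv (hxmem _ hu1 hu2) (hymem _ hu1 hu2)
        (hxmem _ hv1 hv2) (hymem _ hv1 hv2) hu3 hv3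
        (hxdec _ _ hu1 huv hv2) (hydec _ _ hu1 huv hv2)
    -- c reproduces the differences
    have hcval : ∀ j ∈ Finset.Icc 1 n, c j * (x j - y j) = φ (x j) - φ (y j) := by
      intro j hj
      by_cases hxy : x j = y j
      · rw [hxy]; simp
      · have hjU : j ∈ U := Finset.mem_filter.2 ⟨hj, hxy⟩
        have : F j = j := hFid j hjU
        simp only [hcdef, this]
        exact div_mul_cancel₀ _ (sub_ne_zero.2 hxy)
    -- partial sums are nonnegative
    have hT0 : ∀ k, k ≤ n → 0 ≤ ∑ j ∈ Finset.Icc 1 k, (x j - y j) := by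
      intro k hk
      rcases Nat.eq_zero_or_pos k with rfl | hk1
      · simp
      · rw [Finset.sum_sub_distrib]
        exact sub_nonneg.2 (hmaj k hk1 hk)
    have hTn : ∑ j ∈ Finset.Icc 1 n, (x j - y j) = 0 := by
      rw [Finset.sum_sub_distrib, hsum, sub_self]
    -- Abel summation
    have habel : ∀ N, N ≤ n →
        c N * (∑ j ∈ Finset.Icc 1 N, (x j - y j)) ≤
          ∑ j ∈ Finset.Icc 1 N, c j * (x j - y j) := by
      intro N
      induction N with
      | zero => intro _; simp
      | succ N ih =>
        intro hN
        have hN' : N ≤ n := Nat.le_of_succ_le hN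
        rw [Finset.sum_Icc_succ_top (Nat.succ_le_succ (Nat.zero_le N)),
          Finset.sum_Icc_succ_top (Nat.succ_le_succ (Nat.zero_le N))]
        have h1 := ih hN'
        have h2 : c (N + 1) ≤ c N := hcanti N (N + 1) (Nat.le_succ N)
        have h3 : 0 ≤ ∑ j ∈ Finset.Icc 1 N, (x j - y j) := hT0 N hN'
        have h4 := mul_le_mul_of_nonneg_right h2 h3
        have hexp : c (N + 1) * ((∑ j ∈ Finset.Icc 1 N, (x j - y j)) + (x (N+1) - y (N+1)))
            = c (N + 1) * (∑ j ∈ Finset.Icc 1 N, (x j - y j))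
              + c (N + 1) * (x (N+1) - y (N+1)) := by ring
        rw [hexp]
        linarith
    have hfin : 0 ≤ ∑ j ∈ Finset.Icc 1 n, c j * (x j - y j) := by
      have := habel n le_rfl
      rw [hTn, mul_zero] at this
      exact this
    rw [Finset.sum_congr rfl hcval] at hfin
    rw [Finset.sum_sub_distrib] at hfin
    linarith
  · -- degenerate case: x = y on Icc 1 n
    refine le_of_eq (Finset.sum_congr rfl ?_)
    intro j hj
    have : x j = y j := by
      by_contra h
      exact hUe ⟨j, Finset.mem_filter.2 ⟨hj, h⟩⟩
    rw [this]
end
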